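/- Let T, K be positive integers, data z_t, z'_t ∈ ℝ^{D_z} and g_t ∈ ℝ for t = 1,…,T, discount factor α ∈ [0,1), weights ξ ∈ ℝ^K, means m_1,…,m_K ∈ ℝ^{D_z}, and positive-definite symmetric covariances C_1,…,C_K. Let Q be the associated GMM Q-function and set δ_t := g_t + α Q(z'_t) − Q(z_t). Fix k ∈ {1,…,K}. Then ℒ, viewed as a function of m_k alone (all other parameters fixed), is differentiable, and its gradient at m_k equals Σ_{t=1}^T 4 δ_t ξ_k C_k^{−1} [ α (z'_t − m_k) 𝒢(z'_t | m_k, C_k) − (z_t − m_k) 𝒢(z_t | m_k, C_k) ]. -/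

import Mathlib

open Matrix

/-- The Gaussian kernel `𝒢(z | m, C) := exp(−(z − m)ᵀ C⁻¹ (z − m))`. -/
noncomputable def gaussKer {D : ℕ} (z m : Fin D → ℝ) (C : Matrix (Fin D) (Fin D) ℝ) : ℝ :=
  Real.exp (-((z - m) ⬝ᵥ (C⁻¹ *ᵥ (z - m))))

/-- The GMM Q-function `Q(z) := Σ_k ξ_k 𝒢(z | m_k, C_k)`. -/
noncomputable def gmmQ {D K : ℕ} (ξ : Fin K → ℝ) (m : Fin K → Fin D → ℝ)
    (C : Fin K → Matrix (Fin D) (Fin D) ℝ) (z : Fin D → ℝ) : ℝ :=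
  ∑ k, ξ k * gaussKer z (m k) (C k)

/-- The Bellman-residual objective `ℒ := Σ_t (g_t + α Q(z'_t) − Q(z_t))²`. -/
noncomputable def bellmanLoss {D K T : ℕ} (g : Fin T → ℝ) (z z' : Fin T → Fin D → ℝ)
    (α : ℝ) (ξ : Fin K → ℝ) (m : Fin K → Fin D → ℝ)
    (C : Fin K → Matrix (Fin D) (Fin D) ℝ) : ℝ :=
  ∑ t, (g t + α * gmmQ ξ m C (z' t) - gmmQ ξ m C (z t)) ^ 2

noncomputable def dotCLM {D : ℕ} (w : Fin D → ℝ) : (Fin D → ℝ) →L[ℝ] ℝ :=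
  ∑ i, w i • ContinuousLinearMap.proj i

lemma dotCLM_apply {D : ℕ} (w v : Fin D → ℝ) : dotCLM w v = w ⬝ᵥ v := by
  simp [dotCLM, dotProduct]

lemma hasFDerivAt_quad {D : ℕ} (M : Matrix (Fin D) (Fin D) ℝ) (hM : M.IsSymm)
    (z m : Fin D → ℝ) :
    HasFDerivAt (fun m : Fin D → ℝ => (z - m) ⬝ᵥ (M *ᵥ (z - m)))
      ((-2 : ℝ) • dotCLM (M *ᵥ (z - m))) m := by
  have key : ∀ i : Fin D, HasFDerivAt
      (fun m : Fin D → ℝ => (z i - m i) * ∑ j, M i j * (z j - m j))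
      ((z i - m i) • (∑ j, M i j • -(ContinuousLinearMap.proj j : (Fin D → ℝ) →L[ℝ] ℝ))
        + (∑ j, M i j * (z j - m j)) • -(ContinuousLinearMap.proj i : (Fin D → ℝ) →L[ℝ] ℝ)) m := by
    intro i
    have h1 : HasFDerivAt (fun m : Fin D → ℝ => z i - m i)
        (-(ContinuousLinearMap.proj i : (Fin D → ℝ) →L[ℝ] ℝ)) m := by
      simpa using (hasFDerivAt_const (z i) m).fun_sub
        ((ContinuousLinearMap.proj i : (Fin D → ℝ) →L[ℝ] ℝ).hasFDerivAt)
    have h2 : HasFDerivAt (fun m : Fin D → ℝ => ∑ j, M i j * (z j - m j))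
        (∑ j, M i j • -(ContinuousLinearMap.proj j : (Fin D → ℝ) →L[ℝ] ℝ)) m := by
      apply HasFDerivAt.fun_sum
      intro j _
      have : HasFDerivAt (fun m : Fin D → ℝ => z j - m j)
          (-(ContinuousLinearMap.proj j : (Fin D → ℝ) →L[ℝ] ℝ)) m := by
        simpa using (hasFDerivAt_const (z j) m).fun_sub
          ((ContinuousLinearMap.proj j : (Fin D → ℝ) →L[ℝ] ℝ).hasFDerivAt)
      exact this.const_mul (M i j)
    exact h1.mul h2
  have hsum := HasFDerivAt.fun_sum (fun i (_ : i ∈ Finset.univ) => key i)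
  have hfun : (fun m : Fin D → ℝ => ∑ i, (z i - m i) * ∑ j, M i j * (z j - m j))
      = fun m : Fin D → ℝ => (z - m) ⬝ᵥ (M *ᵥ (z - m)) := by
    funext m
    simp [dotProduct, Matrix.mulVec, Pi.sub_apply]
  rw [hfun] at hsum
  refine hsum.congr_fderiv (Eq.symm ?_)
  ext v
  simp only [ContinuousLinearMap.smul_apply, dotCLM_apply, ContinuousLinearMap.sum_apply,
    ContinuousLinearMap.add_apply, ContinuousLinearMap.neg_apply, ContinuousLinearMap.proj_apply,
    smul_eq_mul, Matrix.mulVec, dotProduct, Pi.sub_apply]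
  rw [Finset.sum_add_distrib]
  have swap : ∑ i, (z i - m i) * ∑ j, M i j * -(v j)
      = ∑ i, (∑ j, M i j * (z j - m j)) * -(v i) := by
    simp_rw [Finset.mul_sum]
    rw [Finset.sum_comm]
    simp_rw [Finset.sum_mul]
    refine Finset.sum_congr rfl fun i _ => Finset.sum_congr rfl fun j _ => ?_
    rw [hM.apply j i]
    ring
  rw [swap, ← Finset.sum_add_distrib, Finset.mul_sum]
  refine Finset.sum_congr rfl fun i _ => ?_
  ring

lemma euclid_equiv_apply {D : ℕ} (v : EuclideanSpace ℝ (Fin D)) (i : Fin D) :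
    (EuclideanSpace.equiv (Fin D) ℝ) v i = v i := rfl

lemma isSymm_inv {D : ℕ} (C : Matrix (Fin D) (Fin D) ℝ) (h : C.IsSymm) : C⁻¹.IsSymm := by
  unfold Matrix.IsSymm
  rw [Matrix.transpose_nonsing_inv, h.eq]

lemma hasFDerivAt_gauss {D : ℕ} (C : Matrix (Fin D) (Fin D) ℝ) (hC : C.IsSymm)
    (z m : Fin D → ℝ) :
    HasFDerivAt (fun mk : Fin D → ℝ => gaussKer z mk C)
      ((2 * gaussKer z m C) • dotCLM (C⁻¹ *ᵥ (z - m))) m := by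
  have h := ((hasFDerivAt_quad C⁻¹ (isSymm_inv C hC) z m).neg).exp
  refine h.congr_fderiv (Eq.symm ?_)
  ext v
  simp only [gaussKer, ContinuousLinearMap.smul_apply, ContinuousLinearMap.neg_apply,
    smul_eq_mul, Pi.neg_apply]
  ring

theorem stmt_3 (D T K : ℕ) (hT : 0 < T) (hK : 0 < K)
    (z z' : Fin T → Fin D → ℝ) (g : Fin T → ℝ)
    (α : ℝ) (hα : α ∈ Set.Ico (0 : ℝ) 1)
    (ξ : Fin K → ℝ) (m : Fin K → Fin D → ℝ)
    (C : Fin K → Matrix (Fin D) (Fin D) ℝ)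
    (hC : ∀ k, (C k).PosDef) (hCs : ∀ k, (C k).IsSymm)
    (δ : Fin T → ℝ)
    (hδ : ∀ t, δ t = g t + α * gmmQ ξ m C (z' t) - gmmQ ξ m C (z t))
    (k : Fin K) :
    HasGradientAt
      (fun mk : EuclideanSpace ℝ (Fin D) =>
        bellmanLoss g z z' α ξ (Function.update m k (WithLp.equiv 2 (Fin D → ℝ) mk)) C)
      ((WithLp.equiv 2 (Fin D → ℝ)).symm
        (∑ t, (4 * δ t * ξ k) •
          ((C k)⁻¹ *ᵥ
            ((α * gaussKer (z' t) (m k) (C k)) • (z' t - m k)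
              - gaussKer (z t) (m k) (C k) • (z t - m k)))))
      ((WithLp.equiv 2 (Fin D → ℝ)).symm (m k)) := by
  -- the Fréchet derivative of the loss as a function on the plain pi type
  set LG : (Fin D → ℝ) → (Fin D → ℝ) →L[ℝ] ℝ := fun w =>
    (2 * gaussKer w (m k) (C k)) • dotCLM ((C k)⁻¹ *ᵥ (w - m k)) with hLG
  -- derivative of the Q-function in m_k at m k
  have hQ : ∀ v : Fin D → ℝ, HasFDerivAt
      (fun w : Fin D → ℝ => gmmQ ξ (Function.update m k w) C v)
      (ξ k • LG v) (m k) := by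
    intro v
    have hrw : (fun w : Fin D → ℝ => gmmQ ξ (Function.update m k w) C v)
        = fun w => ξ k * gaussKer v w (C k)
          + ∑ j ∈ Finset.univ.erase k, ξ j * gaussKer v (m j) (C j) := by
      funext w
      rw [gmmQ, ← Finset.add_sum_erase _ _ (Finset.mem_univ k), Function.update_self]
      congr 1
      refine Finset.sum_congr rfl fun j hj => ?_
      rw [Function.update_of_ne (Finset.mem_erase.1 hj).1]
    rw [hrw]
    exact ((hasFDerivAt_gauss (C k) (hCs k) v (m k)).const_mul (ξ k)).add_const _
  have hu : ∀ t, HasFDerivAt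
      (fun w : Fin D → ℝ => g t + α * gmmQ ξ (Function.update m k w) C (z' t)
        - gmmQ ξ (Function.update m k w) C (z t))
      (α • (ξ k • LG (z' t)) - ξ k • LG (z t)) (m k) := by
    intro t
    exact (((hQ (z' t)).const_mul α).const_add (g t)).sub (hQ (z t))
  have hsq : ∀ t, HasFDerivAt
      (fun w : Fin D → ℝ => (g t + α * gmmQ ξ (Function.update m k w) C (z' t)
        - gmmQ ξ (Function.update m k w) C (z t)) ^ 2)
      ((2 * (g t + α * gmmQ ξ m C (z' t) - gmmQ ξ m C (z t))) •
        (α • (ξ k • LG (z' t)) - ξ k • LG (z t))) (m k) := by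
    intro t
    have h2 := (hu t).mul (hu t)
    simp only [Function.update_eq_self] at h2
    have hfn : (fun w : Fin D → ℝ => (g t + α * gmmQ ξ (Function.update m k w) C (z' t)
          - gmmQ ξ (Function.update m k w) C (z t)) ^ 2)
        = fun w => (g t + α * gmmQ ξ (Function.update m k w) C (z' t)
          - gmmQ ξ (Function.update m k w) C (z t)) *
          (g t + α * gmmQ ξ (Function.update m k w) C (z' t)
          - gmmQ ξ (Function.update m k w) C (z t)) := by
      funext w; ring
    rw [hfn]
    refine h2.congr_fderiv (Eq.symm ?_)
    ext v
    simp only [ContinuousLinearMap.smul_apply, ContinuousLinearMap.add_apply, smul_eq_mul]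
    ring
  have hF : HasFDerivAt
      (fun w : Fin D → ℝ => bellmanLoss g z z' α ξ (Function.update m k w) C)
      (∑ t, (2 * (g t + α * gmmQ ξ m C (z' t) - gmmQ ξ m C (z t))) •
        (α • (ξ k • LG (z' t)) - ξ k • LG (z t))) (m k) :=
    HasFDerivAt.fun_sum (fun t (_ : t ∈ Finset.univ) => hsq t)
  -- compose with the identification of EuclideanSpace with the pi type
  have hcomp : HasFDerivAt
      (fun mk : EuclideanSpace ℝ (Fin D) =>
        bellmanLoss g z z' α ξ (Function.update m k (WithLp.equiv 2 (Fin D → ℝ) mk)) C)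
      ((∑ t, (2 * (g t + α * gmmQ ξ m C (z' t) - gmmQ ξ m C (z t))) •
        (α • (ξ k • LG (z' t)) - ξ k • LG (z t))).comp
        (EuclideanSpace.equiv (Fin D) ℝ : EuclideanSpace ℝ (Fin D) ≃L[ℝ] (Fin D → ℝ)).toContinuousLinearMap)
      ((WithLp.equiv 2 (Fin D → ℝ)).symm (m k)) := by
    have he : (EuclideanSpace.equiv (Fin D) ℝ)
        ((WithLp.equiv 2 (Fin D → ℝ)).symm (m k)) = m k := by
      simp [EuclideanSpace.equiv]
      rfl
    rw [← he] at hF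
    exact hF.comp _ ((EuclideanSpace.equiv (Fin D) ℝ).hasFDerivAt)
  rw [hasGradientAt_iff_hasFDerivAt]
  refine hcomp.congr_fderiv (Eq.symm ?_)
  ext v
  simp only [InnerProductSpace.toDual_apply_apply, PiLp.inner_apply, RCLike.inner_apply,
    conj_trivial, ContinuousLinearMap.coe_comp', Function.comp_apply,
    ContinuousLinearEquiv.coe_coe, ContinuousLinearMap.sum_apply,
    ContinuousLinearMap.smul_apply, ContinuousLinearMap.sub_apply, smul_eq_mul,
    dotCLM_apply, hLG]
  simp only [WithLp.equiv_symm_apply, PiLp.toLp_apply, Finset.sum_apply, Pi.smul_apply, smul_eq_mul,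
    WithLp.equiv_apply, dotProduct, Matrix.mulVec_sub, Matrix.mulVec_smul, Pi.sub_apply]
  simp_rw [← hδ, PiLp.coe_continuousLinearEquiv, Finset.mul_sum]
  rw [Finset.sum_comm]
  refine Finset.sum_congr rfl fun t _ => ?_
  simp only [Finset.mul_sum, ← Finset.sum_sub_distrib]
  refine Finset.sum_congr rfl fun i _ => ?_
  ring
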